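/- Let d ≥ 1 and a ∈ (0,1), γ > 0 be real numbers, let (A_n)_{n≥1} be a sequence of positive reals, let (x_n)_{n≥1} be a sequence of vectors in R^d, and let N ≥ 1 be an integer such that for all n > N: (i) ||x_n||_∞ ≤ a log n, (ii) A_n ≥ γ n, and (iii) γ n ≥ A_1 n^a exp(||x_1||_∞). Then for every i ∈ {1,...,d}, sup_{n≥1}(-log A_n + x_{n,i}) = max_{1≤n≤N}(-log A_n + x_{n,i}), where x_{n,i} denotes the i-th coordinate of x_n. -/
import Mathlib


open Real
open scoped NNReal

noncomputable section

/-- **deterministic record-breaking lemma.** If for all `n > N` one has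
`‖x_n‖_∞ ≤ a log n`, `A_n ≥ γ n` and `γ n ≥ A_1 n^a exp(‖x_1‖_∞)`, then for every coordinate
`i`, `sup_{n ≥ 1} (-log A_n + x_{n,i}) = max_{1 ≤ n ≤ N} (-log A_n + x_{n,i})`.
(The sup norm `‖·‖` on `Fin d → ℝ` is `‖x‖_∞ = max_i |x_i|`.) -/
theorem record_breaking_truncates_sup
    {d : ℕ} (hd : 1 ≤ d)
    (a γ : ℝ) (ha0 : 0 < a) (ha1 : a < 1) (hγ : 0 < γ)
    (A : ℕ → ℝ) (hApos : ∀ n, 0 < A n)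
    (x : ℕ → Fin d → ℝ)
    (N : ℕ) (hN : 1 ≤ N)
    (hX : ∀ n : ℕ, N < n → ‖x n‖ ≤ a * Real.log n)
    (hA : ∀ n : ℕ, N < n → γ * n ≤ A n)
    (hAa : ∀ n : ℕ, N < n → A 1 * (n : ℝ) ^ a * Real.exp ‖x 1‖ ≤ γ * n) :
    ∀ i : Fin d,
      (⨆ n : {m : ℕ // 1 ≤ m}, (-Real.log (A n.1) + x n.1 i))
        = (Finset.Icc 1 N).sup' (Finset.nonempty_Icc.mpr hN)
            (fun n => -Real.log (A n) + x n i) := by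

  intro i
  have key : ∀ n : ℕ, 1 ≤ n → -Real.log (A n) + x n i ≤
      (Finset.Icc 1 N).sup' (Finset.nonempty_Icc.mpr hN)
        (fun n => -Real.log (A n) + x n i) := by
    intro n hn
    by_cases h : n ≤ N
    · exact Finset.le_sup' (fun n => -Real.log (A n) + x n i)
        (Finset.mem_Icc.mpr ⟨hn, h⟩)
    · push_neg at h
      have hn0 : (0:ℝ) < n := by exact_mod_cast Nat.lt_of_lt_of_le Nat.zero_lt_one hn
      have hγn : (0:ℝ) < γ * n := mul_pos hγ hn0
      have hxni : x n i ≤ a * Real.log n := by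
        calc x n i ≤ |x n i| := le_abs_self _
        _ = ‖x n i‖ := (Real.norm_eq_abs _).symm
        _ ≤ ‖x n‖ := norm_le_pi_norm (x n) i
        _ ≤ a * Real.log n := hX n h
      have hlogA : Real.log (γ * n) ≤ Real.log (A n) :=
        Real.log_le_log hγn (hA n h)
      have hpos : (0:ℝ) < A 1 * (n : ℝ) ^ a * Real.exp ‖x 1‖ :=
        mul_pos (mul_pos (hApos 1) (Real.rpow_pos_of_pos hn0 a)) (Real.exp_pos _)
      have hlog2 : Real.log (A 1) + a * Real.log n + ‖x 1‖ ≤ Real.log (γ * n) := by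
        have := Real.log_le_log hpos (hAa n h)
        rwa [Real.log_mul (ne_of_gt (mul_pos (hApos 1) (Real.rpow_pos_of_pos hn0 a)))
            (Real.exp_ne_zero _),
          Real.log_mul (ne_of_gt (hApos 1)) (ne_of_gt (Real.rpow_pos_of_pos hn0 a)),
          Real.log_rpow hn0, Real.log_exp] at this
      have hx1 : -‖x 1‖ ≤ x 1 i := by
        have h1 : |x 1 i| ≤ ‖x 1‖ := by
          rw [← Real.norm_eq_abs]; exact norm_le_pi_norm (x 1) i
        linarith [neg_abs_le (x 1 i)]
      have hchain : -Real.log (A n) + x n i ≤ -Real.log (A 1) + x 1 i := by linarith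
      exact hchain.trans (Finset.le_sup' (fun n => -Real.log (A n) + x n i)
        (Finset.mem_Icc.mpr ⟨le_refl 1, hN⟩))
  haveI : Nonempty {m : ℕ // 1 ≤ m} := ⟨⟨1, le_refl 1⟩⟩
  apply le_antisymm
  · exact ciSup_le fun n => key n.1 n.2
  · apply Finset.sup'_le
    intro n hn
    have h1 := (Finset.mem_Icc.mp hn).1
    exact le_ciSup (f := fun n : {m : ℕ // 1 ≤ m} => -Real.log (A n.1) + x n.1 i)
      ⟨_, by rintro _ ⟨m, rfl⟩; exact key m.1 m.2⟩ ⟨n, h1⟩
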